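/- Let s>0 and integers 1≤k≤n. With h_s(j) = ψ(j+2s) − ψ(2s) and φ_s(k,n) = (1/k)·Γ(n+1)Γ(n-k+2s)/(Γ(n-k+1)Γ(n+2s)), one has Σ_{l=0}^k (−1)^{k-l} binom(n,l) binom(n-l,k-l) h_s(n−l) = −φ_s(k,n). -/

import Mathlib

noncomputable section

namespace HeatModel

/-- The digamma function `ψ = Γ'/Γ`. -/
def digamma (x : ℝ) : ℝ := deriv Real.Gamma x / Real.Gamma x

/-- The cumulative rate function `h_s(j) = ψ(j+2s) − ψ(2s)`. -/
def hRate (s : ℝ) (j : ℕ) : ℝ := digamma ((j : ℝ) + 2 * s) - digamma (2 * s)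

/-- The jump rates `φ_s(k,n)` of the harmonic dual process (for `1 ≤ k ≤ n`). -/
def phiRate (s : ℝ) (k n : ℕ) : ℝ :=
  (1 / (k : ℝ)) * (Real.Gamma ((n : ℝ) + 1) * Real.Gamma ((n : ℝ) - (k : ℝ) + 2 * s)) /
    (Real.Gamma ((n : ℝ) - (k : ℝ) + 1) * Real.Gamma ((n : ℝ) + 2 * s))

lemma digamma_add_one {x : ℝ} (hx : 0 < x) : digamma (x + 1) = digamma x + 1 / x := by
  have hΓ : 0 < Real.Gamma x := Real.Gamma_pos_of_pos hx
  have hne : ∀ m : ℕ, x ≠ -m := by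
    intro m
    have : (0:ℝ) ≤ m := Nat.cast_nonneg m
    nlinarith
  have hd : DifferentiableAt ℝ Real.Gamma x := Real.differentiableAt_Gamma hne
  have h1 : deriv (fun y => Real.Gamma (y + 1)) x = deriv Real.Gamma (x + 1) :=
    deriv_comp_add_const _ _ _
  have heq : (fun y => Real.Gamma (y + 1)) =ᶠ[nhds x] fun y => y * Real.Gamma y := by
    filter_upwards [eventually_gt_nhds hx] with y hy
    exact Real.Gamma_add_one hy.ne'
  have h2 : deriv (fun y => y * Real.Gamma y) x
      = Real.Gamma x + x * deriv Real.Gamma x := by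
    have := (hasDerivAt_id' x).mul hd.hasDerivAt
    have h := this.deriv
    simp only [one_mul] at h
    exact h
  have h3 : deriv Real.Gamma (x + 1) = Real.Gamma x + x * deriv Real.Gamma x := by
    rw [← h1, heq.deriv_eq, h2]
  unfold digamma
  rw [h3, Real.Gamma_add_one hx.ne']
  field_simp
  ring

lemma altsum_succ (g : ℕ → ℝ) (k a : ℕ) :
    ∑ m ∈ Finset.range (k+2), (-1:ℝ)^m * ((k+1).choose m : ℝ) * g (a+m)
    = ∑ m ∈ Finset.range (k+1), (-1:ℝ)^m * (k.choose m : ℝ) * g (a+m)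
      - ∑ m ∈ Finset.range (k+1), (-1:ℝ)^m * (k.choose m : ℝ) * g (a+1+m) := by
  rw [Finset.sum_range_succ' (fun m => (-1:ℝ)^m * ((k+1).choose m : ℝ) * g (a+m)) (k+1)]
  have h1 : ∀ m ∈ Finset.range (k+1),
      (-1:ℝ)^(m+1) * ((k+1).choose (m+1) : ℝ) * g (a+(m+1))
      = (-1:ℝ)^(m+1) * (k.choose (m+1) : ℝ) * g (a+(m+1))
        - (-1:ℝ)^m * (k.choose m : ℝ) * g (a+1+m) := by
    intro m _
    rw [Nat.choose_succ_succ]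
    have hm : a + 1 + m = a + (m+1) := by omega
    rw [hm]
    push_cast
    ring
  rw [Finset.sum_congr rfl h1, Finset.sum_sub_distrib]
  have h2 := Finset.sum_range_succ' (fun m => (-1:ℝ)^m * (k.choose m : ℝ) * g (a+m)) (k+1)
  rw [Finset.sum_range_succ (fun m => (-1:ℝ)^m * (k.choose m : ℝ) * g (a+m)) (k+1)] at h2
  simp only [Nat.choose_succ_self, Nat.cast_zero, mul_zero, zero_mul, add_zero,
    pow_zero, Nat.choose_zero_right, Nat.cast_one, one_mul, Nat.add_zero] at h2 ⊢
  linarith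

lemma prod_pos (s : ℝ) (hs : 0 < s) (a K : ℕ) :
    0 < ∏ i ∈ Finset.range K, ((a:ℝ) + 2*s + i) := by
  apply Finset.prod_pos
  intro i _
  have h1 : (0:ℝ) ≤ a := Nat.cast_nonneg a
  have h2 : (0:ℝ) ≤ i := Nat.cast_nonneg i
  nlinarith

lemma hRate_succ (s : ℝ) (hs : 0 < s) (a : ℕ) :
    hRate s (a+1) = hRate s a + 1 / ((a:ℝ) + 2*s) := by
  have hx : 0 < (a:ℝ) + 2*s := by positivity
  have := digamma_add_one hx
  unfold hRate
  push_cast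
  rw [show (a:ℝ) + 1 + 2*s = ((a:ℝ) + 2*s) + 1 by ring, this]
  ring

lemma altsum_hRate (s : ℝ) (hs : 0 < s) (k : ℕ) : ∀ a : ℕ,
    ∑ m ∈ Finset.range (k+2), (-1:ℝ)^m * ((k+1).choose m : ℝ) * hRate s (a+m)
    = -(k.factorial : ℝ) / ∏ i ∈ Finset.range (k+1), ((a:ℝ) + 2*s + i) := by
  induction k with
  | zero =>
    intro a
    simp [Finset.sum_range_succ, hRate_succ s hs a]
    ring
  | succ k ih =>
    intro a
    rw [show k+1+2 = (k+1)+2 from rfl, altsum_succ (fun m => hRate s m) (k+1) a]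
    rw [ih a, ih (a+1)]
    have hx : 0 < (a:ℝ) + 2*s := by positivity
    have hPa : (0:ℝ) < ∏ i ∈ Finset.range (k+1), ((a:ℝ) + 2*s + i) := prod_pos s hs a (k+1)
    have hPa1 : (0:ℝ) < ∏ i ∈ Finset.range (k+1), (((a+1:ℕ):ℝ) + 2*s + i) :=
      prod_pos s hs (a+1) (k+1)
    have hPbig : (0:ℝ) < ∏ i ∈ Finset.range (k+2), ((a:ℝ) + 2*s + i) := prod_pos s hs a (k+2)
    have hshift : ∏ i ∈ Finset.range (k+2), ((a:ℝ) + 2*s + i)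
        = (∏ i ∈ Finset.range (k+1), (((a+1:ℕ):ℝ) + 2*s + i)) * ((a:ℝ) + 2*s) := by
      rw [Finset.prod_range_succ' (fun i => (a:ℝ) + 2*s + i) (k+1)]
      congr 1
      · apply Finset.prod_congr rfl
        intro i _
        push_cast
        ring
      · norm_num
    have hlast : ∏ i ∈ Finset.range (k+2), ((a:ℝ) + 2*s + i)
        = (∏ i ∈ Finset.range (k+1), ((a:ℝ) + 2*s + i)) * ((a:ℝ) + 2*s + (k+1)) := by
      rw [Finset.prod_range_succ]
      push_cast
      ring
    have hfac : ((k+1).factorial : ℝ) = (k+1) * k.factorial := by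
      rw [Nat.factorial_succ]; push_cast; ring
    rw [hfac]
    rw [eq_div_iff (by positivity)]
    have e1 : -(k.factorial:ℝ) / (∏ i ∈ Finset.range (k+1), ((a:ℝ) + 2*s + i))
        = -(k.factorial:ℝ) * ((a:ℝ) + 2*s + (k+1)) / ∏ i ∈ Finset.range (k+2), ((a:ℝ) + 2*s + i) := by
      rw [hlast]; field_simp
    have e2 : -(k.factorial:ℝ) / (∏ i ∈ Finset.range (k+1), (((a+1:ℕ):ℝ) + 2*s + i))
        = -(k.factorial:ℝ) * ((a:ℝ) + 2*s) / ∏ i ∈ Finset.range (k+2), ((a:ℝ) + 2*s + i) := by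
      rw [hshift]; field_simp
    rw [e1, e2]
    field_simp
    ring

lemma Gamma_prod (x : ℝ) (hx : 0 < x) (K : ℕ) :
    Real.Gamma (x + K) = Real.Gamma x * ∏ i ∈ Finset.range K, (x + i) := by
  induction K with
  | zero => simp
  | succ K ih =>
    have hpos : 0 < x + K := by positivity
    have : x + ((K+1 : ℕ) : ℝ) = (x + K) + 1 := by push_cast; ring
    rw [this, Real.Gamma_add_one hpos.ne', ih, Finset.prod_range_succ]
    ring

/-- The binomial identity relating the cumulative rate `h_s` and the jump rates `φ_s`:
`Σ_{l=0}^k (−1)^{k−l} binom(n,l) binom(n−l,k−l) h_s(n−l) = −φ_s(k,n)`. -/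
theorem binomial_rate_identity (s : ℝ) (hs : 0 < s) (k n : ℕ) (hk : 1 ≤ k) (hkn : k ≤ n) :
    (∑ l ∈ Finset.range (k + 1),
        (-1 : ℝ) ^ (k - l) * (Nat.choose n l : ℝ) * (Nat.choose (n - l) (k - l) : ℝ) *
          hRate s (n - l))
    = -phiRate s k n := by
  -- Step 1: pull out binom(n,k) and reindex the sum.
  have step1 : (∑ l ∈ Finset.range (k + 1),
        (-1 : ℝ) ^ (k - l) * (Nat.choose n l : ℝ) * (Nat.choose (n - l) (k - l) : ℝ) *
          hRate s (n - l))
      = (Nat.choose n k : ℝ) *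
        ∑ m ∈ Finset.range (k + 1), (-1:ℝ)^m * (Nat.choose k m : ℝ) * hRate s (n - k + m) := by
    rw [Finset.mul_sum]
    rw [← Finset.sum_range_reflect
      (fun m => (Nat.choose n k : ℝ) * ((-1:ℝ)^m * (Nat.choose k m : ℝ) * hRate s (n - k + m)))
      (k+1)]
    apply Finset.sum_congr rfl
    intro l hl
    have hlk : l ≤ k := by
      have := Finset.mem_range.mp hl; omega
    have h1 : k + 1 - 1 - l = k - l := by omega
    rw [h1]
    have h2 : Nat.choose k (k - l) = Nat.choose k l := Nat.choose_symm hlk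
    have h3 : n - k + (k - l) = n - l := by omega
    have h4 : (Nat.choose n l) * (Nat.choose (n - l) (k - l)) = (Nat.choose n k) * (Nat.choose k l) := by
      rw [← Nat.choose_mul hlk]
    rw [h2, h3]
    have h4c : (n.choose l : ℝ) * ((n - l).choose (k - l) : ℝ)
        = (n.choose k : ℝ) * (k.choose l : ℝ) := by exact_mod_cast h4
    linear_combination ((-1:ℝ)^(k-l) * hRate s (n-l)) * h4c
  rw [step1]
  -- Step 2: evaluate the inner sum via altsum_hRate.
  obtain ⟨k', rfl⟩ : ∃ k', k = k' + 1 := ⟨k - 1, by omega⟩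
  rw [altsum_hRate s hs k' (n - (k'+1))]
  -- Step 3: compute phiRate.
  set a := n - (k'+1) with ha
  set u : ℝ := (a : ℝ) + 2 * s with hu
  have hca : ((a : ℕ) : ℝ) = (n : ℝ) - ((k'+1 : ℕ) : ℝ) := by
    rw [ha]
    push_cast [Nat.cast_sub hkn]
    ring
  have hupos : 0 < u := by positivity
  have hGn2s : Real.Gamma ((n:ℝ) + 2*s)
      = Real.Gamma u * ∏ i ∈ Finset.range (k'+1), (u + i) := by
    have := Gamma_prod u hupos (k'+1)
    rw [show u + ((k'+1 : ℕ) : ℝ) = (n:ℝ) + 2*s by rw [hu, hca]; push_cast; ring] at this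
    exact this
  have hGn1 : Real.Gamma ((n:ℝ) + 1) = (n.factorial : ℝ) := by
    rw [show (n:ℝ) + 1 = ((n:ℕ):ℝ) + 1 from rfl, ← Nat.cast_one, ← Nat.cast_add]
    exact_mod_cast Real.Gamma_nat_eq_factorial n
  have hGnk1 : Real.Gamma ((n:ℝ) - ((k'+1:ℕ):ℝ) + 1) = (a.factorial : ℝ) := by
    rw [← hca]
    rw [← Nat.cast_one, ← Nat.cast_add]
    exact_mod_cast Real.Gamma_nat_eq_factorial a
  have hGu : Real.Gamma ((n:ℝ) - ((k'+1:ℕ):ℝ) + 2*s) = Real.Gamma u := by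
    rw [hu, hca]
  have hprod_eq : ∏ i ∈ Finset.range (k'+1), ((a:ℝ) + 2*s + (i:ℝ))
      = ∏ i ∈ Finset.range (k'+1), (u + i) := by
    apply Finset.prod_congr rfl
    intro i _
    rw [hu]
  have hGupos : 0 < Real.Gamma u := Real.Gamma_pos_of_pos hupos
  have hPpos : (0:ℝ) < ∏ i ∈ Finset.range (k'+1), (u + i) := by
    rw [← hprod_eq]; exact prod_pos s hs a (k'+1)
  unfold phiRate
  push_cast at hGn2s hGn1 hGnk1 hGu ⊢
  rw [hGn2s, hGn1, hGnk1, hGu, hprod_eq]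
  have key : ((n.choose (k'+1) : ℝ)) * (k'.factorial : ℝ) * ((k'+1 : ℕ) : ℝ) * (a.factorial : ℝ)
      = (n.factorial : ℝ) := by
    have h5 : n.choose (k'+1) * (k'+1).factorial * a.factorial = n.factorial := by
      rw [ha]; exact Nat.choose_mul_factorial_mul_factorial hkn
    have h6 : (k'+1).factorial = (k'+1) * k'.factorial := Nat.factorial_succ k'
    rw [h6] at h5
    exact_mod_cast by push_cast [← h5]; ring
  have hk1 : ((k':ℝ) + 1) ≠ 0 := by positivity
  field_simp
  push_cast at key
  linear_combination (-1:ℝ) * key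

end HeatModel
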